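/- arXiv:1001.4541 — 2 statements merged into one kernel-verified Lean document; each statement's English description precedes it below -/
import Mathlib

section
/- Let s ∈ ℝ with 1/2 < s < 1 and let n, k ∈ ℤ with n > k. Then for every r with 0 < r < 1, n·((1 − r²)/r)·Φ_{2n,2k}(r) + (1 − r²)·Φ_{2n,2k}'(r) − k·((1 + r²)/r)·Φ_{2n,2k}(r) = 2·(n − k)·Φ_{2n,2k+2}(r). (This expresses the action of the raising operator: R.Φ_{2n,2k} = 2(n − k)·Φ_{2n,2k+2} for n > k.) -/
open Filter Polynomial Real

/-- The Gauss hypergeometric series `F(a, b; c; x) = Σ (a)_m (b)_m / ((c)_m m!) x^m`. -/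
noncomputable def hyperF (a b c x : ℝ) : ℝ :=
  ∑' m : ℕ, ((ascPochhammer ℝ m).eval a * (ascPochhammer ℝ m).eval b /
    ((ascPochhammer ℝ m).eval c * (Nat.factorial m))) * x ^ m

/-- The sign `ε = 1` if `n ≥ k`, `ε = −1` otherwise. -/
noncomputable def eps (n k : ℤ) : ℝ := if k ≤ n then 1 else -1

/-- `Φ_{2n,2k}(r) = (1 − r²)^s r^{|n−k|} F(s − εk, s + εn; 1 + |n−k|; r²)`. -/
noncomputable def Phi (s : ℝ) (n k : ℤ) (r : ℝ) : ℝ :=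
  (1 - r ^ 2) ^ s * r ^ (n - k).natAbs *
    hyperF (s - eps n k * k) (s + eps n k * n) (1 + (n - k).natAbs) (r ^ 2)

/-- Eval form of `ascPochhammer_succ_left`. -/
lemma poch_succ_left_eval (x : ℝ) (m : ℕ) :
    (ascPochhammer ℝ (m+1)).eval x = x * (ascPochhammer ℝ m).eval (x+1) := by
  rw [ascPochhammer_succ_left]
  simp [eval_comp]

lemma poch_ne_zero {x : ℝ} (hx : ∀ i : ℕ, x + i ≠ 0) (m : ℕ) :
    (ascPochhammer ℝ m).eval x ≠ 0 := by
  induction m with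
  | zero => simp
  | succ j ih =>
    rw [ascPochhammer_succ_eval]
    exact mul_ne_zero ih (hx j)

lemma tendsto_shift_div (a b : ℝ) :
    Tendsto (fun m : ℕ => (a + m)/(b + m)) atTop (nhds 1) := by
  have hb : Tendsto (fun m : ℕ => b + (m:ℝ)) atTop atTop := by
    exact tendsto_atTop_add_const_left _ b tendsto_natCast_atTop_atTop
  have h0 : Tendsto (fun m : ℕ => (a - b)/(b + (m:ℝ))) atTop (nhds 0) :=
    Tendsto.div_atTop tendsto_const_nhds hb
  have h1 : Tendsto (fun m : ℕ => 1 + (a - b)/(b + (m:ℝ))) atTop (nhds 1) := by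
    simpa using (tendsto_const_nhds (x := (1:ℝ)) (f := atTop)).add h0
  apply h1.congr'
  filter_upwards [hb.eventually_gt_atTop 0] with m hm
  field_simp
  ring

/-- `|a+m|/(1+m) → 1`. -/
lemma tendsto_abs_shift_div (a b : ℝ) :
    Tendsto (fun m : ℕ => |a + m| / (b + m)) atTop (nhds 1) := by
  apply (tendsto_shift_div a b).congr'
  filter_upwards [tendsto_natCast_atTop_atTop.eventually_ge_atTop (-a)] with m hm
  rw [abs_of_nonneg (by linarith)]

/-- ratio of hypergeometric coefficients tends to 1 -/
lemma tendsto_absratio (a b c : ℝ) :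
    Tendsto (fun m : ℕ => |a + m| * |b + m| / ((c + m) * ((m:ℝ) + 1)))
      atTop (nhds 1) := by
  have h := ((tendsto_abs_shift_div a 1).mul (tendsto_abs_shift_div b c))
  rw [mul_one] at h
  apply h.congr'
  filter_upwards [tendsto_natCast_atTop_atTop.eventually_gt_atTop (max (-c) 0)] with m hm
  rw [max_lt_iff] at hm
  rw [div_mul_div_comm]
  ring_nf

lemma summable_pow_series (A : ℕ → ℝ) (hA : ∀ m, A m ≠ 0)
    (hrat : Tendsto (fun m => |A (m+1)| / |A m|) atTop (nhds 1))
    {x : ℝ} (hx : |x| < 1) : Summable (fun m => A m * x ^ m) := by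
  rcases eq_or_ne x 0 with rfl | hx0
  · apply summable_of_ne_finset_zero (s := {0})
    intro m hm
    simp only [Finset.mem_singleton] at hm
    simp [zero_pow hm]
  · apply summable_of_ratio_test_tendsto_lt_one hx
    · exact Eventually.of_forall fun m => mul_ne_zero (hA m) (pow_ne_zero m hx0)
    · have := hrat.mul_const |x|
      rw [one_mul] at this
      apply this.congr
      intro m
      have h1 : |A m| ≠ 0 := abs_ne_zero.mpr (hA m)
      have h2 : |x ^ m| ≠ 0 := abs_ne_zero.mpr (pow_ne_zero m hx0)
      rw [Real.norm_eq_abs, Real.norm_eq_abs, abs_mul, abs_mul, pow_succ, abs_mul]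
      field_simp

lemma hasDerivAt_pow_series (A : ℕ → ℝ) (hA : ∀ m, A m ≠ 0)
    (hrat : Tendsto (fun m => |A (m+1)| / |A m|) atTop (nhds 1))
    {x : ℝ} (hx : |x| < 1) :
    HasDerivAt (fun y => ∑' m, A m * y ^ m) (∑' m, A m * ((m:ℝ) * x ^ (m-1))) x ∧
      Summable (fun m => A m * ((m:ℝ) * x ^ (m-1))) := by
  obtain ⟨ρ, hxρ, hρ1⟩ := exists_between hx
  have hρ0 : 0 < ρ := lt_of_le_of_lt (abs_nonneg x) hxρ
  have hu : Summable (fun m : ℕ => |A m| * ((m:ℝ) * ρ ^ (m-1))) := by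
    rw [← summable_nat_add_iff 1]
    have hterm : (fun j : ℕ => |A (j+1)| * (((j+1:ℕ):ℝ) * ρ ^ (j+1-1)))
        = fun j : ℕ => |A (j+1)| * (((j:ℝ)+1) * ρ ^ j) := by
      funext j; push_cast; ring
    rw [hterm]
    apply summable_of_ratio_test_tendsto_lt_one hρ1
    · refine Eventually.of_forall fun j => mul_ne_zero (abs_ne_zero.mpr (hA _)) ?_
      positivity
    · have h2 : Tendsto (fun j : ℕ => |A (j+1+1)| / |A (j+1)|) atTop (nhds 1) :=
        hrat.comp (tendsto_add_atTop_nat 1)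
      have h3 := (h2.mul (tendsto_shift_div 2 1)).mul_const ρ
      rw [one_mul, one_mul] at h3
      apply h3.congr
      intro j
      have a1 : (0:ℝ) < |A (j+1)| := abs_pos.mpr (hA _)
      have hj1 : (0:ℝ) < (j:ℝ) + 1 := by positivity
      have hpj : (0:ℝ) < ρ ^ j := by positivity
      rw [Real.norm_eq_abs, Real.norm_eq_abs,
        abs_of_nonneg (mul_nonneg (abs_nonneg _) (mul_nonneg (add_nonneg (Nat.cast_nonneg _)
          zero_le_one) (pow_nonneg hρ0.le _))),
        abs_of_nonneg (mul_nonneg (abs_nonneg _) (mul_nonneg (add_nonneg (Nat.cast_nonneg _)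
          zero_le_one) (pow_nonneg hρ0.le _)))]
      rw [pow_succ]
      have a2 : (0:ℝ) ≤ |A (j+1+1)| := abs_nonneg _
      push_cast
      field_simp
      ring
  have hderiv : ∀ m : ℕ, ∀ y : ℝ, HasDerivAt (fun z => A m * z ^ m)
      (A m * ((m:ℝ) * y ^ (m-1))) y := fun m y => (hasDerivAt_pow m y).const_mul (A m)
  have hbound : ∀ m : ℕ, ∀ y ∈ Metric.ball (0:ℝ) ρ, ‖A m * ((m:ℝ) * y ^ (m-1))‖ ≤
      |A m| * ((m:ℝ) * ρ ^ (m-1)) := by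
    intro m y hy
    rw [Metric.mem_ball, Real.dist_eq, sub_zero] at hy
    rw [Real.norm_eq_abs, abs_mul, abs_mul]
    apply mul_le_mul_of_nonneg_left _ (abs_nonneg _)
    rw [abs_of_nonneg (Nat.cast_nonneg m)]
    apply mul_le_mul_of_nonneg_left _ (Nat.cast_nonneg m)
    rw [abs_pow]
    exact pow_le_pow_left₀ (abs_nonneg y) hy.le _
  have hxmem : x ∈ Metric.ball (0:ℝ) ρ := by
    rw [Metric.mem_ball, Real.dist_eq, sub_zero]; exact hxρ
  constructor
  · exact hasDerivAt_tsum_of_isPreconnected hu Metric.isOpen_ball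
      (convex_ball (0:ℝ) ρ).isPreconnected (fun m y hy => hderiv m y)
      hbound hxmem (summable_pow_series A hA hrat hx) hxmem
  · exact Summable.of_norm_bounded hu (fun m => hbound m x hxmem)

/-- hypergeometric coefficient -/
noncomputable def hcoef (a b c : ℝ) (m : ℕ) : ℝ :=
  (ascPochhammer ℝ m).eval a * (ascPochhammer ℝ m).eval b /
    ((ascPochhammer ℝ m).eval c * (Nat.factorial m))

lemma hyperF_eq_tsum (a b c x : ℝ) : hyperF a b c x = ∑' m, hcoef a b c m * x ^ m := rfl

lemma hcoef_zero (a b c : ℝ) : hcoef a b c 0 = 1 := by simp [hcoef]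

lemma hcoef_ne_zero {a b c : ℝ} (ha : ∀ i : ℕ, a + i ≠ 0) (hb : ∀ i : ℕ, b + i ≠ 0)
    (hc : 0 < c) (m : ℕ) : hcoef a b c m ≠ 0 := by
  have h1 := poch_ne_zero ha m
  have h2 := poch_ne_zero hb m
  have h3 : (0:ℝ) < (ascPochhammer ℝ m).eval c := ascPochhammer_pos m c hc
  have h4 : (0:ℝ) < (Nat.factorial m : ℝ) := by positivity
  rw [hcoef]
  positivity

lemma hcoef_succ (a b c : ℝ) (hc : 0 < c) (m : ℕ) :
    hcoef a b c (m+1) = hcoef a b c m * ((a+m)*(b+m)/((c+m)*((m:ℝ)+1))) := by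
  have h3 : (0:ℝ) < (ascPochhammer ℝ m).eval c := ascPochhammer_pos m c hc
  have h4 : (0:ℝ) < (Nat.factorial m : ℝ) := by positivity
  have h5 : (0:ℝ) < c + m := by positivity
  have h6 : (0:ℝ) < (m:ℝ) + 1 := by positivity
  rw [hcoef, hcoef, ascPochhammer_succ_eval, ascPochhammer_succ_eval, ascPochhammer_succ_eval,
    Nat.factorial_succ]
  push_cast
  field_simp

lemma hcoef_ratio_tendsto {a b c : ℝ} (ha : ∀ i : ℕ, a + i ≠ 0) (hb : ∀ i : ℕ, b + i ≠ 0)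
    (hc : 0 < c) :
    Tendsto (fun m => |hcoef a b c (m+1)| / |hcoef a b c m|) atTop (nhds 1) := by
  apply (tendsto_absratio a b c).congr
  intro m
  have h5 : (0:ℝ) < c + m := by positivity
  have h6 : (0:ℝ) < (m:ℝ) + 1 := by positivity
  have h7 := hcoef_ne_zero ha hb hc m
  rw [hcoef_succ a b c hc m, abs_mul,
    mul_div_cancel_left₀ _ (abs_ne_zero.mpr h7), abs_div, abs_mul, abs_mul,
    abs_of_pos h5, abs_of_pos h6]

lemma coeff_id (a b : ℝ) (d : ℕ) (hd : 1 ≤ d) (j : ℕ) :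
    (d:ℝ) * hcoef (a-1) b (d:ℝ) (j+1)
      = ((d:ℝ) + ((j:ℝ)+1)) * hcoef a b ((d:ℝ)+1) (j+1) - (b + j) * hcoef a b ((d:ℝ)+1) j := by
  have hd0 : (0:ℝ) < (d:ℝ) := by exact_mod_cast hd
  have h1 : (0:ℝ) < (ascPochhammer ℝ j).eval ((d:ℝ)+1) := ascPochhammer_pos j _ (by positivity)
  have h2 : (0:ℝ) < (Nat.factorial j : ℝ) := by positivity
  have h3 : (0:ℝ) < (d:ℝ) + 1 + j := by positivity
  have h4 : (0:ℝ) < (j:ℝ) + 1 := by positivity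
  have e1 : (ascPochhammer ℝ (j+1)).eval (a-1) = (a-1) * (ascPochhammer ℝ j).eval a := by
    rw [poch_succ_left_eval, sub_add_cancel]
  have e2 : (ascPochhammer ℝ (j+1)).eval ((d:ℝ)) = (d:ℝ) * (ascPochhammer ℝ j).eval ((d:ℝ)+1) :=
    poch_succ_left_eval _ j
  rw [hcoef, hcoef, hcoef, e1, e2, ascPochhammer_succ_eval, ascPochhammer_succ_eval,
    ascPochhammer_succ_eval, Nat.factorial_succ]
  push_cast
  field_simp
  ring

lemma hyper_contig (a b : ℝ) (d : ℕ) (hd : 1 ≤ d)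
    (ha : ∀ i : ℕ, (a - 1) + i ≠ 0) (hb : ∀ i : ℕ, b + i ≠ 0)
    {x : ℝ} (hx : |x| < 1) :
    ∃ F', HasDerivAt (hyperF a b ((d:ℝ)+1)) F' x ∧
      ((d:ℝ) - b*x) * hyperF a b ((d:ℝ)+1) x + x*(1-x)*F'
        = (d:ℝ) * hyperF (a-1) b (d:ℝ) x := by
  have ha' : ∀ i : ℕ, a + i ≠ 0 := by
    intro i
    have h := ha (i+1)
    intro hcon
    apply h
    push_cast
    linarith
  have hc1 : (0:ℝ) < (d:ℝ)+1 := by positivity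
  have hd0 : (0:ℝ) < (d:ℝ) := by exact_mod_cast hd
  set A := hcoef a b ((d:ℝ)+1) with hAdef
  have hAne := hcoef_ne_zero ha' hb hc1
  have hArat := hcoef_ratio_tendsto ha' hb hc1
  obtain ⟨hder, hsum'⟩ := hasDerivAt_pow_series A hAne hArat hx
  set F' := ∑' m, A m * ((m:ℝ) * x ^ (m-1)) with hF'def
  have hfun : hyperF a b ((d:ℝ)+1) = fun y => ∑' m, A m * y ^ m := by
    funext y; rw [hyperF_eq_tsum]
  set Fv := hyperF a b ((d:ℝ)+1) x with hFvdef
  set Gv := hyperF (a-1) b (d:ℝ) x with hGvdef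
  refine ⟨F', by rw [hfun]; exact hder, ?_⟩
  have hF : HasSum (fun m => A m * x ^ m) Fv := by
    rw [hFvdef, hyperF_eq_tsum]
    exact (summable_pow_series A hAne hArat hx).hasSum
  have hFd : HasSum (fun m => A m * ((m:ℝ) * x ^ (m-1))) F' := hsum'.hasSum
  have hxF' : HasSum (fun m : ℕ => (m:ℝ) * A m * x ^ m) (x * F') := by
    have h := hFd.mul_left x
    rw [show (fun m : ℕ => x * (A m * ((m:ℝ) * x ^ (m-1)))) = fun m : ℕ => (m:ℝ) * A m * x ^ m by
      funext m
      cases m with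
      | zero => simp
      | succ j => push_cast; rw [pow_succ]; ring] at h
    exact h
  have hxF : HasSum (fun m => A m * x ^ (m+1)) (x * Fv) := by
    have h := hF.mul_left x
    rw [show (fun m : ℕ => x * (A m * x ^ m)) = fun m : ℕ => A m * x ^ (m+1) by
      funext m; rw [pow_succ]; ring] at h
    exact h
  have hx2F' : HasSum (fun m : ℕ => (m:ℝ) * A m * x ^ (m+1)) (x * (x * F')) := by
    have h := hxF'.mul_left x
    rw [show (fun m : ℕ => x * ((m:ℝ) * A m * x ^ m)) = fun m : ℕ => (m:ℝ) * A m * x ^ (m+1) by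
      funext m; rw [pow_succ]; ring] at h
    exact h
  have hw : HasSum (fun m : ℕ => (b + (m:ℝ)) * A m * x ^ (m+1)) (b * (x * Fv) + x * (x * F')) := by
    have h := (hxF.mul_left b).add hx2F'
    rw [show (fun m : ℕ => b * (A m * x ^ (m+1)) + (m:ℝ) * A m * x ^ (m+1))
        = fun m : ℕ => (b + (m:ℝ)) * A m * x ^ (m+1) by funext m; ring] at h
    exact h
  set w' : ℕ → ℝ := fun m => if m = 0 then 0 else (b + ((m-1:ℕ):ℝ)) * A (m-1) * x ^ m with hw'def
  have hw'sum : HasSum w' (b * (x * Fv) + x * (x * F')) := by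
    have h : (fun n => w' (n+1)) = fun m : ℕ => (b + (m:ℝ)) * A m * x ^ (m+1) := by
      funext m; simp [hw'def]
    have h2 := (hasSum_nat_add_iff (f := w') 1).mp (by rw [h]; exact hw)
    simpa [hw'def] using h2
  have hS : HasSum (fun m : ℕ => ((d:ℝ) + (m:ℝ)) * A m * x ^ m) ((d:ℝ) * Fv + x * F') := by
    have h := (hF.mul_left (d:ℝ)).add hxF'
    rw [show (fun m : ℕ => (d:ℝ) * (A m * x ^ m) + (m:ℝ) * A m * x ^ m)
        = fun m : ℕ => ((d:ℝ) + (m:ℝ)) * A m * x ^ m by funext m; ring] at h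
    exact h
  have hG : HasSum (fun m : ℕ => hcoef (a-1) b (d:ℝ) m * x ^ m) Gv := by
    rw [hGvdef, hyperF_eq_tsum]
    exact (summable_pow_series _ (hcoef_ne_zero ha hb hd0) (hcoef_ratio_tendsto ha hb hd0)
      hx).hasSum
  have hdG := hG.mul_left (d:ℝ)
  have hkey : (fun m : ℕ => (d:ℝ) * (hcoef (a-1) b (d:ℝ) m * x ^ m))
      = fun m : ℕ => ((d:ℝ) + (m:ℝ)) * A m * x ^ m - w' m := by
    funext m
    cases m with
    | zero => simp [hw'def, hcoef_zero, hAdef]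
    | succ j =>
      simp only [hw'def, Nat.succ_ne_zero, if_false, Nat.add_sub_cancel]
      rw [hAdef]
      push_cast
      linear_combination x ^ (j+1) * coeff_id a b d hd j
  rw [hkey] at hdG
  have huniq := (hS.sub hw'sum).unique hdG
  linear_combination huniq

theorem raising_operator_on_Phi (s : ℝ) (hs : 1/2 < s) (hs1 : s < 1) (n k : ℤ) (hnk : k < n)
    (r : ℝ) (hr : 0 < r) (hr1 : r < 1) :
    (n : ℝ) * ((1 - r ^ 2) / r) * Phi s n k r + (1 - r ^ 2) * deriv (Phi s n k) r -
      (k : ℝ) * ((1 + r ^ 2) / r) * Phi s n k r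
      = 2 * ((n : ℝ) - (k : ℝ)) * Phi s n (k + 1) r := by
  have h2r : r ^ 2 < 1 := by nlinarith
  have h1r2 : (0:ℝ) < 1 - r ^ 2 := by nlinarith
  set d : ℕ := (n - k).natAbs with hddef
  have hd1 : 1 ≤ d := by rw [hddef]; omega
  have hdc : ((d:ℕ):ℝ) = (n:ℝ) - (k:ℝ) := by
    rw [hddef]
    have h : ((n - k).natAbs : ℤ) = n - k := Int.natAbs_of_nonneg (by omega)
    have h2 : (((n - k).natAbs : ℤ) : ℝ) = ((n : ℝ) - k) := by rw [h]; push_cast; ring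
    rw [Int.cast_natCast] at h2
    exact h2
  have heps1 : eps n k = 1 := if_pos hnk.le
  have heps2 : eps n (k+1) = 1 := if_pos (by omega)
  set a : ℝ := s - (k:ℝ) with hadef
  set b : ℝ := s + (n:ℝ) with hbdef
  have hsnotint : ∀ j : ℤ, s + (j:ℝ) ≠ 0 := by
    intro j hcon
    have h1 : ((-j:ℤ):ℝ) = s := by push_cast; linarith
    have h2 : (0:ℤ) < -j := by
      have : (0:ℝ) < ((-j:ℤ):ℝ) := by rw [h1]; linarith
      exact_mod_cast this
    have h3 : -j < 1 := by
      have : ((-j:ℤ):ℝ) < 1 := by rw [h1]; linarith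
      exact_mod_cast this
    omega
  have ha : ∀ i : ℕ, (a - 1) + (i:ℝ) ≠ 0 := by
    intro i hcon
    exact hsnotint (-(k+1)+i) (by push_cast; rw [hadef] at hcon; push_cast at hcon; linarith)
  have hb : ∀ i : ℕ, b + (i:ℝ) ≠ 0 := by
    intro i hcon
    exact hsnotint (n+i) (by push_cast; rw [hbdef] at hcon; push_cast at hcon; linarith)
  have hxabs : |r ^ 2| < 1 := by rw [abs_of_nonneg (by positivity)]; exact h2r
  obtain ⟨F', hder, hkey⟩ := hyper_contig a b d hd1 ha hb hxabs
  have hPhik : Phi s n k = fun t => (1 - t ^ 2) ^ s * t ^ d * hyperF a b ((d:ℝ)+1) (t ^ 2) := by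
    funext t
    rw [Phi, heps1, ← hddef, one_mul, one_mul, add_comm (1:ℝ) ((d:ℕ):ℝ)]
  have hPhik1 : Phi s n (k+1) r
      = (1 - r ^ 2) ^ s * r ^ (d-1) * hyperF (a-1) b ((d:ℕ):ℝ) (r ^ 2) := by
    have hna : (n - (k+1)).natAbs = d - 1 := by rw [hddef]; omega
    have hc' : (1:ℝ) + ((d-1:ℕ):ℝ) = ((d:ℕ):ℝ) := by
      rw [Nat.cast_sub hd1]; push_cast; ring
    have ha' : s - ((k+1:ℤ):ℝ) = a - 1 := by rw [hadef]; push_cast; ring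
    rw [Phi, heps2, hna, one_mul, one_mul, hc', ha']
  have hd2 : HasDerivAt (fun t : ℝ => t ^ 2) (2 * r) r := by
    simpa using hasDerivAt_pow 2 r
  have hcomp : HasDerivAt (fun t : ℝ => hyperF a b ((d:ℝ)+1) (t ^ 2)) (F' * (2 * r)) r := by
    exact HasDerivAt.comp (𝕜 := ℝ) (𝕜' := ℝ) (h := fun t : ℝ => t ^ 2)
      (h₂ := hyperF a b ((d:ℝ)+1)) (x := r) hder hd2
  have hbase : HasDerivAt (fun t : ℝ => 1 - t ^ 2) (-(2 * r)) r := hd2.const_sub 1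
  have hrp : HasDerivAt (fun t : ℝ => (1 - t ^ 2) ^ s)
      (-(2 * r) * s * (1 - r ^ 2) ^ (s - 1)) r := hbase.rpow_const (Or.inl h1r2.ne')
  have hpow : HasDerivAt (fun t : ℝ => t ^ d) ((d:ℝ) * r ^ (d - 1)) r := hasDerivAt_pow d r
  have hProd := (hrp.mul hpow).mul hcomp
  have hderivPhi : deriv (Phi s n k) r
      = (-(2 * r) * s * (1 - r ^ 2) ^ (s - 1) * r ^ d + (1 - r ^ 2) ^ s * ((d:ℝ) * r ^ (d - 1)))
          * hyperF a b ((d:ℝ)+1) (r ^ 2)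
        + (1 - r ^ 2) ^ s * r ^ d * (F' * (2 * r)) := by
    rw [hPhik]
    exact hProd.deriv
  have hPhikr : Phi s n k r = (1 - r ^ 2) ^ s * r ^ d * hyperF a b ((d:ℝ)+1) (r ^ 2) := by
    rw [hPhik]
  rw [hderivPhi, hPhikr, hPhik1]
  set Fv := hyperF a b ((d:ℝ)+1) (r ^ 2) with hFv
  set Gv := hyperF (a-1) b ((d:ℕ):ℝ) (r ^ 2) with hGv
  have hrd : r ^ d = r ^ (d - 1) * r := by
    rw [← pow_succ]
    congr 1
    omega
  have hE : (1 - r ^ 2) ^ (s - 1) = (1 - r ^ 2) ^ s / (1 - r ^ 2) :=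
    Real.rpow_sub_one h1r2.ne' s
  rw [hrd, hE, ← hdc]
  field_simp
  linear_combination 2 * hkey
    - ((1+r^2)*Fv) * hdc + (2*r^2*Fv) * hbdef
end

section
/- Let s ∈ ℝ and let n, k ∈ ℤ with n > k. Then for every x with 0 < x < 1, the following contiguous relation of hypergeometric series holds: (x·(k + n) + s − n)·F(s − k, s + n; 1 − k + n; x) − (1 − x)·(s − k)·F(s − k + 1, s + n; 1 − k + n; x) = −(n − k)·F(s − k − 1, s + n; n − k; x). -/
open Filter Polynomial Topology


open Filter Polynomial

noncomputable def hterm (a b c : ℝ) (m : ℕ) : ℝ :=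
  (ascPochhammer ℝ m).eval a * (ascPochhammer ℝ m).eval b /
    ((ascPochhammer ℝ m).eval c * (Nat.factorial m))

lemma poch_eval_succ_left (a : ℝ) (m : ℕ) :
    (ascPochhammer ℝ (m + 1)).eval a = a * (ascPochhammer ℝ m).eval (a + 1) := by
  rw [ascPochhammer_succ_left]
  simp [Polynomial.eval_comp]

lemma poch_shift (a : ℝ) (m : ℕ) :
    a * (ascPochhammer ℝ m).eval (a + 1) = (ascPochhammer ℝ m).eval a * (a + m) := by
  rw [← poch_eval_succ_left, ascPochhammer_succ_eval]

lemma hterm_shift (a b c : ℝ) (m : ℕ) :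
    a * hterm (a + 1) b c m = (a + m) * hterm a b c m := by
  unfold hterm
  rw [← mul_div_assoc, ← mul_div_assoc]
  congr 1
  linear_combination (ascPochhammer ℝ m).eval b * poch_shift a m

lemma key (s n k : ℝ) (hnk : k < n) (m : ℕ) :
    (k + n) * hterm (s - k) (s + n) (1 - k + n) m
      + (s - n) * hterm (s - k) (s + n) (1 - k + n) (m + 1)
      - (s - k) * hterm (s - k + 1) (s + n) (1 - k + n) (m + 1)
      + (s - k) * hterm (s - k + 1) (s + n) (1 - k + n) m
    = -(n - k) * hterm (s - k - 1) (s + n) (n - k) (m + 1) := by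
  have h3 := hterm_shift (s - k) (s + n) (1 - k + n) (m + 1)
  have h4 := hterm_shift (s - k) (s + n) (1 - k + n) m
  rw [h3, h4]
  have eA : (ascPochhammer ℝ (m + 1)).eval (s - k)
      = (ascPochhammer ℝ m).eval (s - k) * (s - k + m) := ascPochhammer_succ_eval _ _
  have eB : (ascPochhammer ℝ (m + 1)).eval (s + n)
      = (ascPochhammer ℝ m).eval (s + n) * (s + n + m) := ascPochhammer_succ_eval _ _
  have eC : (ascPochhammer ℝ (m + 1)).eval (1 - k + n)
      = (ascPochhammer ℝ m).eval (1 - k + n) * (1 - k + n + m) := ascPochhammer_succ_eval _ _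
  have eA' : (ascPochhammer ℝ (m + 1)).eval (s - k - 1)
      = (s - k - 1) * (ascPochhammer ℝ m).eval (s - k) := by
    rw [poch_eval_succ_left, show s - k - 1 + 1 = s - k from by ring]
  have eC' : (ascPochhammer ℝ (m + 1)).eval (n - k)
      = (n - k) * (ascPochhammer ℝ m).eval (1 - k + n) := by
    rw [poch_eval_succ_left, show n - k + 1 = 1 - k + n from by ring]
  unfold hterm
  rw [eA, eB, eC, eA', eC', Nat.factorial_succ]
  have hm0 : (0:ℝ) ≤ m := Nat.cast_nonneg m
  have hQ : (ascPochhammer ℝ m).eval (1 - k + n) ≠ 0 :=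
    (ascPochhammer_pos m _ (by linarith)).ne'
  have hcm : (1:ℝ) - k + n + m ≠ 0 := by nlinarith
  have hnk' : n - k ≠ 0 := by linarith
  have hfac : ((Nat.factorial m : ℕ) : ℝ) ≠ 0 := by
    exact_mod_cast (Nat.factorial_pos m).ne'
  have hm1 : ((m:ℝ) + 1) ≠ 0 := by positivity
  push_cast
  field_simp
  ring

lemma hterm_succ (a b c : ℝ) (hc : 0 < c) (m : ℕ) :
    hterm a b c (m + 1) = hterm a b c m * ((a + m) * (b + m) / ((c + m) * (m + 1))) := by
  have hQ : (ascPochhammer ℝ m).eval c ≠ 0 := (ascPochhammer_pos m c hc).ne'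
  have hm0 : (0:ℝ) ≤ m := Nat.cast_nonneg m
  have hcm : c + (m:ℝ) ≠ 0 := by positivity
  have hm1 : ((m:ℝ) + 1) ≠ 0 := by positivity
  have hfac : ((Nat.factorial m : ℕ) : ℝ) ≠ 0 := by
    exact_mod_cast (Nat.factorial_pos m).ne'
  unfold hterm
  rw [ascPochhammer_succ_eval, ascPochhammer_succ_eval, ascPochhammer_succ_eval,
    Nat.factorial_succ]
  push_cast
  field_simp

lemma summable_hterm (a b c x : ℝ) (hc : 0 < c) (hx : |x| < 1) :
    Summable (fun m : ℕ => hterm a b c m * x ^ m) := by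
  set r : ℝ := (1 + |x|) / 2 with hrdef
  have hr1 : r < 1 := by rw [hrdef]; linarith
  have hxr : |x| < r := by rw [hrdef]; linarith
  apply summable_of_ratio_norm_eventually_le hr1
  -- auxiliary tendsto facts
  have hmc : Tendsto (fun m : ℕ => c + (m : ℝ)) atTop atTop :=
    tendsto_atTop_add_const_left _ c tendsto_natCast_atTop_atTop
  have hm1 : Tendsto (fun m : ℕ => (m : ℝ) + 1) atTop atTop :=
    tendsto_atTop_add_const_right _ 1 tendsto_natCast_atTop_atTop
  have hma : Tendsto (fun m : ℕ => a + (m : ℝ)) atTop atTop :=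
    tendsto_atTop_add_const_left _ a tendsto_natCast_atTop_atTop
  have hmb : Tendsto (fun m : ℕ => b + (m : ℝ)) atTop atTop :=
    tendsto_atTop_add_const_left _ b tendsto_natCast_atTop_atTop
  have h1 : Tendsto (fun m : ℕ => (a + (m : ℝ)) / (c + m)) atTop (𝓝 1) := by
    have h0 : Tendsto (fun m : ℕ => (a - c) / (c + (m : ℝ))) atTop (𝓝 0) :=
      hmc.const_div_atTop (a - c)
    have h0' : Tendsto (fun m : ℕ => 1 + (a - c) / (c + (m : ℝ))) atTop (𝓝 (1 + 0)) :=
      tendsto_const_nhds.add h0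
    rw [add_zero] at h0'
    refine h0'.congr' ?_
    filter_upwards [hmc.eventually_gt_atTop 0] with m hm
    field_simp
    ring
  have h2 : Tendsto (fun m : ℕ => (b + (m : ℝ)) / ((m : ℝ) + 1)) atTop (𝓝 1) := by
    have h0 : Tendsto (fun m : ℕ => (b - 1) / ((m : ℝ) + 1)) atTop (𝓝 0) :=
      hm1.const_div_atTop (b - 1)
    have h0' : Tendsto (fun m : ℕ => 1 + (b - 1) / ((m : ℝ) + 1)) atTop (𝓝 (1 + 0)) :=
      tendsto_const_nhds.add h0
    rw [add_zero] at h0'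
    refine h0'.congr' ?_
    filter_upwards [hm1.eventually_gt_atTop 0] with m hm
    field_simp
    ring
  have hq : Tendsto (fun m : ℕ => (a + (m : ℝ)) * (b + m) / ((c + m) * (m + 1)) * |x|)
      atTop (𝓝 |x|) := by
    have := (h1.mul h2).mul_const |x|
    rw [one_mul, one_mul] at this
    refine this.congr fun m => ?_
    rw [div_mul_div_comm]
  filter_upwards [hq.eventually_le_const hxr, hma.eventually_gt_atTop 0,
    hmb.eventually_gt_atTop 0, hmc.eventually_gt_atTop 0] with m hle ha hb hcm
  have hm1' : (0:ℝ) < (m : ℝ) + 1 := by positivity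
  have hRpos : (0:ℝ) ≤ (a + (m:ℝ)) * (b + m) / ((c + m) * (m + 1)) :=
    div_nonneg (mul_nonneg ha.le hb.le) (by positivity)
  have hfm : hterm a b c (m + 1) * x ^ (m + 1)
      = hterm a b c m * x ^ m * ((a + m) * (b + m) / ((c + m) * (m + 1)) * x) := by
    rw [hterm_succ a b c hc m]; ring
  rw [hfm, Real.norm_eq_abs, Real.norm_eq_abs,
    abs_mul (hterm a b c m * x ^ m) _, abs_mul _ x, abs_of_nonneg hRpos, mul_comm r _]
  exact mul_le_mul_of_nonneg_left hle (abs_nonneg _)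



set_option maxHeartbeats 2000000 in
theorem hypergeometric_contiguous (s : ℝ) (n k : ℤ) (hnk : k < n)
    (x : ℝ) (hx0 : 0 < x) (hx1 : x < 1) :
    (x * ((k : ℝ) + (n : ℝ)) + s - (n : ℝ)) *
        hyperF (s - (k : ℝ)) (s + (n : ℝ)) (1 - (k : ℝ) + (n : ℝ)) x -
      (1 - x) * (s - (k : ℝ)) *
        hyperF (s - (k : ℝ) + 1) (s + (n : ℝ)) (1 - (k : ℝ) + (n : ℝ)) x
      = -((n : ℝ) - (k : ℝ)) *
          hyperF (s - (k : ℝ) - 1) (s + (n : ℝ)) ((n : ℝ) - (k : ℝ)) x := by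
  have hkn : (k : ℝ) < (n : ℝ) := by exact_mod_cast hnk
  have hc' : (0:ℝ) < (n : ℝ) - (k : ℝ) := by linarith
  have hc : (0:ℝ) < 1 - (k : ℝ) + (n : ℝ) := by linarith
  have hxabs : |x| < 1 := abs_lt.mpr ⟨by linarith, hx1⟩
  have hu : Summable (fun m : ℕ =>
      hterm (s - (k:ℝ)) (s + (n:ℝ)) (1 - (k:ℝ) + (n:ℝ)) m * x ^ m) :=
    summable_hterm _ _ _ _ hc hxabs
  have hv : Summable (fun m : ℕ =>
      hterm (s - (k:ℝ) + 1) (s + (n:ℝ)) (1 - (k:ℝ) + (n:ℝ)) m * x ^ m) :=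
    summable_hterm _ _ _ _ hc hxabs
  have hw : Summable (fun m : ℕ =>
      hterm (s - (k:ℝ) - 1) (s + (n:ℝ)) ((n:ℝ) - (k:ℝ)) m * x ^ m) :=
    summable_hterm _ _ _ _ hc' hxabs
  have hsu : Summable (fun m : ℕ =>
      hterm (s - (k:ℝ)) (s + (n:ℝ)) (1 - (k:ℝ) + (n:ℝ)) m * x ^ (m + 1)) :=
    (hu.mul_left x).congr (fun m => by ring)
  have hsv : Summable (fun m : ℕ =>
      hterm (s - (k:ℝ) + 1) (s + (n:ℝ)) (1 - (k:ℝ) + (n:ℝ)) m * x ^ (m + 1)) :=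
    (hv.mul_left x).congr (fun m => by ring)
  have hu1 : Summable (fun m : ℕ =>
      hterm (s - (k:ℝ)) (s + (n:ℝ)) (1 - (k:ℝ) + (n:ℝ)) (m + 1) * x ^ (m + 1)) := by
    exact (summable_nat_add_iff 1).mpr hu
  have hv1 : Summable (fun m : ℕ =>
      hterm (s - (k:ℝ) + 1) (s + (n:ℝ)) (1 - (k:ℝ) + (n:ℝ)) (m + 1) * x ^ (m + 1)) := by
    exact (summable_nat_add_iff 1).mpr hv
  have hw1 : Summable (fun m : ℕ =>
      hterm (s - (k:ℝ) - 1) (s + (n:ℝ)) ((n:ℝ) - (k:ℝ)) (m + 1) * x ^ (m + 1)) := by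
    exact (summable_nat_add_iff 1).mpr hw
  have hFu : hyperF (s - (k:ℝ)) (s + (n:ℝ)) (1 - (k:ℝ) + (n:ℝ)) x
      = ∑' m : ℕ, hterm (s - (k:ℝ)) (s + (n:ℝ)) (1 - (k:ℝ) + (n:ℝ)) m * x ^ m := rfl
  have hFv : hyperF (s - (k:ℝ) + 1) (s + (n:ℝ)) (1 - (k:ℝ) + (n:ℝ)) x
      = ∑' m : ℕ, hterm (s - (k:ℝ) + 1) (s + (n:ℝ)) (1 - (k:ℝ) + (n:ℝ)) m * x ^ m := rfl
  have hFw : hyperF (s - (k:ℝ) - 1) (s + (n:ℝ)) ((n:ℝ) - (k:ℝ)) x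
      = ∑' m : ℕ, hterm (s - (k:ℝ) - 1) (s + (n:ℝ)) ((n:ℝ) - (k:ℝ)) m * x ^ m := rfl
  rw [hFu, hFv, hFw]
  -- abbreviations
  set U := ∑' m : ℕ, hterm (s - (k:ℝ)) (s + (n:ℝ)) (1 - (k:ℝ) + (n:ℝ)) m * x ^ m with hU
  set V := ∑' m : ℕ, hterm (s - (k:ℝ) + 1) (s + (n:ℝ)) (1 - (k:ℝ) + (n:ℝ)) m * x ^ m with hV
  set W := ∑' m : ℕ, hterm (s - (k:ℝ) - 1) (s + (n:ℝ)) ((n:ℝ) - (k:ℝ)) m * x ^ m with hW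
  set SU := ∑' m : ℕ, hterm (s - (k:ℝ)) (s + (n:ℝ)) (1 - (k:ℝ) + (n:ℝ)) m * x ^ (m + 1)
    with hSU
  set SV := ∑' m : ℕ, hterm (s - (k:ℝ) + 1) (s + (n:ℝ)) (1 - (k:ℝ) + (n:ℝ)) m * x ^ (m + 1)
    with hSV
  set U1 := ∑' m : ℕ,
      hterm (s - (k:ℝ)) (s + (n:ℝ)) (1 - (k:ℝ) + (n:ℝ)) (m + 1) * x ^ (m + 1) with hU1
  set V1 := ∑' m : ℕ,
      hterm (s - (k:ℝ) + 1) (s + (n:ℝ)) (1 - (k:ℝ) + (n:ℝ)) (m + 1) * x ^ (m + 1) with hV1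
  set W1 := ∑' m : ℕ,
      hterm (s - (k:ℝ) - 1) (s + (n:ℝ)) ((n:ℝ) - (k:ℝ)) (m + 1) * x ^ (m + 1) with hW1
  have E1 : x * U = SU := by
    rw [hU, hSU, ← tsum_mul_left]
    exact tsum_congr fun m => by ring
  have E2 : x * V = SV := by
    rw [hV, hSV, ← tsum_mul_left]
    exact tsum_congr fun m => by ring
  have E3 : U = 1 + U1 := by
    rw [hU, hU1, Summable.tsum_eq_zero_add hu]
    norm_num [hterm]
  have E4 : V = 1 + V1 := by
    rw [hV, hV1, Summable.tsum_eq_zero_add hv]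
    norm_num [hterm]
  have E5 : W = 1 + W1 := by
    rw [hW, hW1, Summable.tsum_eq_zero_add hw]
    norm_num [hterm]
  have Ekey : ((k:ℝ) + (n:ℝ)) * SU + (s - (n:ℝ)) * U1 - (s - (k:ℝ)) * V1
      + (s - (k:ℝ)) * SV = -((n:ℝ) - (k:ℝ)) * W1 := by
    rw [hSU, hU1, hV1, hSV, hW1, ← tsum_mul_left, ← tsum_mul_left, ← tsum_mul_left,
      ← tsum_mul_left, ← tsum_mul_left,
      ← Summable.tsum_add (hsu.mul_left _) (hu1.mul_left _),
      ← Summable.tsum_sub ((hsu.mul_left _).add (hu1.mul_left _)) (hv1.mul_left _),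
      ← Summable.tsum_add (((hsu.mul_left _).add (hu1.mul_left _)).sub (hv1.mul_left _))
        (hsv.mul_left _)]
    exact tsum_congr fun m => by
      linear_combination x ^ (m + 1) * key s (n:ℝ) (k:ℝ) hkn m
  calc (x * ((k:ℝ) + (n:ℝ)) + s - (n:ℝ)) * U - (1 - x) * (s - (k:ℝ)) * V
      = ((k:ℝ) + (n:ℝ)) * (x * U) + (s - (n:ℝ)) * U - (s - (k:ℝ)) * V
        + (s - (k:ℝ)) * (x * V) := by ring
    _ = ((k:ℝ) + (n:ℝ)) * SU + (s - (n:ℝ)) * (1 + U1) - (s - (k:ℝ)) * (1 + V1)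
        + (s - (k:ℝ)) * SV := by rw [E1, E2, E3, E4]
    _ = ((s - (n:ℝ)) - (s - (k:ℝ)))
        + (((k:ℝ) + (n:ℝ)) * SU + (s - (n:ℝ)) * U1 - (s - (k:ℝ)) * V1
          + (s - (k:ℝ)) * SV) := by ring
    _ = ((s - (n:ℝ)) - (s - (k:ℝ))) + (-((n:ℝ) - (k:ℝ)) * W1) := by rw [Ekey]
    _ = -((n:ℝ) - (k:ℝ)) * (1 + W1) := by ring
    _ = -((n:ℝ) - (k:ℝ)) * W := by rw [E5]
end
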